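/- arXiv:1601.04380 — 5 statements merged into one kernel-verified Lean document; each statement's English description precedes it below -/
import Mathlib

section
/- For every n ≥ 1 and every real ζ with U'_{2n-1}(ζ) = 0, one has T_{2n+1}(ζ) = U_{2n-1}(ζ) * (ζ^2 * (1 + 1/(2n)) - 1). -/
open Polynomial Polynomial.Chebyshev

/-- If `ζ` is a critical point of `U₂ₙ₋₁`, then
`T₂ₙ₊₁(ζ) = U₂ₙ₋₁(ζ) (ζ²(1 + 1/(2n)) - 1)`. -/
theorem chebyshev_critical_point_T_identity (n : ℕ) (hn : 1 ≤ n) (ζ : ℝ)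
    (hζ : (derivative (U ℝ (2 * n - 1))).eval ζ = 0) :
    (T ℝ (2 * n + 1)).eval ζ =
      (U ℝ (2 * n - 1)).eval ζ * (ζ ^ 2 * (1 + 1 / (2 * (n : ℝ))) - 1) := by
  have hN : (2 * (n : ℝ)) ≠ 0 := by
    have : (0:ℝ) < n := by exact_mod_cast hn
    positivity
  have hi1 : (2 * (n : ℤ) - 1) + 1 = 2 * n := by ring
  have hi2 : (2 * (n : ℤ) - 1) + 2 = 2 * n + 1 := by ring
  have h1 := add_one_mul_T_eq_poly_in_U (R := ℝ) (2 * (n : ℤ) - 1)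
  have h2 := T_eq_X_mul_T_sub_pol_U (R := ℝ) (2 * (n : ℤ) - 1)
  rw [hi1] at h1
  rw [hi1, hi2] at h2
  have e1 := congrArg (Polynomial.eval ζ) h1
  have e2 := congrArg (Polynomial.eval ζ) h2
  simp only [eval_mul, eval_add, eval_sub, eval_one, eval_X, eval_pow, eval_intCast,
    Int.cast_sub, Int.cast_mul, Int.cast_ofNat, Int.cast_natCast, Int.cast_one, hζ,
    mul_zero] at e1 e2
  push_cast [eval_ofNat, eval_natCast] at e1
  -- e1 : (2 * n - 1 + 1) * (T ℝ (2 * n)).eval ζ = ζ * (U ℝ (2 * n - 1)).eval ζ - (1 - ζ ^ 2) * 0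
  rw [e2]
  have hT : (T ℝ (2 * (n : ℤ))).eval ζ
      = ζ * (U ℝ (2 * (n : ℤ) - 1)).eval ζ / (2 * (n : ℝ)) := by
    field_simp
    linarith [e1]
  rw [hT]
  field_simp
  ring
end

section
/- For every n ≥ 1 and every real ζ with U'_{2n-1}(ζ) = 0 and U_{2n-1}(ζ) ≠ 0, -T_{2n+1}(ζ)/((2n+1) U_{2n-1}(ζ)) - T_{2n-1}(ζ)/((2n-1) U_{2n-1}(ζ)) + ζ^2 = ζ^2 - 2/((2n+1)(2n-1)). -/
open Polynomial Polynomial.Chebyshev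

/-- The roots of the Jeff polynomial: at a critical point `ζ` of `U₂ₙ₋₁` with
`U₂ₙ₋₁(ζ) ≠ 0`, the given combination equals `ζ² - 2/((2n+1)(2n-1))`. -/
theorem jeff_root_formula (n : ℕ) (hn : 1 ≤ n) (ζ : ℝ)
    (hζ : (derivative (U ℝ (2 * n - 1))).eval ζ = 0)
    (hU : (U ℝ (2 * n - 1)).eval ζ ≠ 0) :
    -(T ℝ (2 * n + 1)).eval ζ / ((2 * (n : ℝ) + 1) * (U ℝ (2 * n - 1)).eval ζ) -
        (T ℝ (2 * n - 1)).eval ζ / ((2 * (n : ℝ) - 1) * (U ℝ (2 * n - 1)).eval ζ) + ζ ^ 2 =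
      ζ ^ 2 - 2 / ((2 * (n : ℝ) + 1) * (2 * (n : ℝ) - 1)) := by
  set m : ℤ := 2 * (n : ℤ) - 1 with hm
  have h1 := congr_arg (Polynomial.eval ζ) (add_one_mul_T_eq_poly_in_U (R := ℝ) m)
  have h2 := congr_arg (Polynomial.eval ζ) (T_eq_X_mul_T_sub_pol_U ℝ m)
  have h3 := congr_arg (Polynomial.eval ζ) (T_add_two ℝ m)
  have e1 : m + 1 = 2 * (n : ℤ) := by ring
  have e2 : m + 2 = 2 * (n : ℤ) + 1 := by ring
  rw [e1] at h1 h2 h3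
  rw [e2] at h2 h3
  simp only [eval_mul, eval_add, eval_sub, eval_one, eval_pow, eval_X, eval_ofNat,
    eval_intCast] at h1 h2 h3
  rw [hζ] at h1
  have hma : ((m : ℝ) + 1) = 2 * (n : ℝ) := by push_cast [hm]; ring
  rw [hma] at h1
  have ha : (2 * (n : ℝ) + 1) ≠ 0 := by positivity
  have hb : (2 * (n : ℝ) - 1) ≠ 0 := by
    have : (1 : ℝ) ≤ n := by exact_mod_cast hn
    nlinarith
  have key : (2 * (n : ℝ) - 1) * (T ℝ (2 * (n : ℤ) + 1)).eval ζ +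
      (2 * (n : ℝ) + 1) * (T ℝ m).eval ζ = 2 * (U ℝ m).eval ζ := by
    linear_combination (2 * (n : ℝ) + 1) * h3 - 2 * h2 + 2 * ζ * h1
  set t1 := (T ℝ (2 * (n : ℤ) + 1)).eval ζ
  set tm := (T ℝ m).eval ζ
  set u := (U ℝ m).eval ζ
  field_simp
  linear_combination (norm := ring) (-1 : ℝ) * key
end

section
/- For every n ≥ 1, the polynomial (2n-1) * T_{2n+1}(x) + (2n+1) * T_{2n-1}(x) is divisible by x^3, i.e., x^3 divides (2n-1) T_{2n+1} + (2n+1) T_{2n-1} in the polynomial ring over ℚ. -/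
open Polynomial Polynomial.Chebyshev

lemma cheb_coeffs (m : ℕ) :
    (T ℚ (2*m)).coeff 0 = (-1)^m ∧ (T ℚ (2*m)).coeff 1 = 0 ∧
    (T ℚ (2*m)).coeff 2 = (-1)^(m+1)*2*m^2 ∧
    (T ℚ (2*m+1)).coeff 0 = 0 ∧ (T ℚ (2*m+1)).coeff 1 = (-1)^m*(2*m+1) ∧
    (T ℚ (2*m+1)).coeff 2 = 0 := by
  induction m with
  | zero =>
    norm_num [T_zero, T_one, coeff_one, coeff_X]
  | succ m ih =>
    obtain ⟨h0, h1, h2, h3, h4, h5⟩ := ih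
    have e1 : T ℚ (2*(m+1 : ℕ)) = 2 * X * T ℚ (2*m+1) - T ℚ (2*m) := by
      push_cast
      rw [show 2*((m:ℤ)+1) = 2*(m:ℤ)+2 by ring, T_add_two]
    have e2 : T ℚ (2*(m+1 : ℕ)+1) = 2 * X * T ℚ (2*(m+1 : ℕ)) - T ℚ (2*m+1) := by
      push_cast
      rw [show 2*((m:ℤ)+1)+1 = 2*(m:ℤ)+1+2 by ring, T_add_two,
        show 2*(m:ℤ)+1+1 = 2*((m:ℤ)+1) by ring]
    rw [e1, e2, e1]
    simp only [coeff_sub, mul_assoc, coeff_X_mul, coeff_sub]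
    have hx0 : ∀ p : ℚ[X], (X * p).coeff 0 = 0 := by intro p; simp
    have hx1 : ∀ p : ℚ[X], (X * p).coeff 1 = p.coeff 0 := fun p => coeff_X_mul p 0
    have hx2 : ∀ p : ℚ[X], (X * p).coeff 2 = p.coeff 1 := fun p => coeff_X_mul p 1
    refine ⟨?_, ?_, ?_, ?_, ?_, ?_⟩ <;>
      simp only [coeff_ofNat_mul, coeff_sub, hx0, hx1, hx2, h0, h1, h2, h3, h4, h5] <;>
      push_cast <;> ring

/-- `x³` divides `(2n-1) T₂ₙ₊₁ + (2n+1) T₂ₙ₋₁` over ℚ. -/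
theorem X_cubed_dvd_mutt_numerator (n : ℕ) (hn : 1 ≤ n) :
    (X : ℚ[X]) ^ 3 ∣
      (2 * (n : ℚ[X]) - 1) * T ℚ (2 * n + 1) + (2 * (n : ℚ[X]) + 1) * T ℚ (2 * n - 1) := by
  obtain ⟨m, rfl⟩ := Nat.exists_eq_add_of_le hn
  have c1 := cheb_coeffs m
  have c2 := cheb_coeffs (m+1)
  have i1 : (2 * ((1+m : ℕ) : ℤ) + 1) = (2*((m+1:ℕ):ℤ)+1) := by push_cast; ring
  have i2 : (2 * ((1+m : ℕ) : ℤ) - 1) = (2*((m:ℕ):ℤ)+1) := by push_cast; ring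
  have hc : (2 * ((1+m : ℕ) : ℚ[X]) - 1) = C (2*((1+m:ℕ):ℚ) - 1) := by simp [map_sub, map_add, map_mul, map_ofNat, C_eq_natCast]
  have hc' : (2 * ((1+m : ℕ) : ℚ[X]) + 1) = C (2*((1+m:ℕ):ℚ) + 1) := by simp [map_sub, map_add, map_mul, map_ofNat, C_eq_natCast]
  rw [X_pow_dvd_iff]
  intro d hd
  rw [i1, i2, hc, hc']
  interval_cases d <;>
    simp only [coeff_add, coeff_C_mul, c1.1, c1.2.1, c1.2.2.1, c1.2.2.2.1, c1.2.2.2.2.1,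
      c1.2.2.2.2.2, c2.1, c2.2.1, c2.2.2.1, c2.2.2.2.1, c2.2.2.2.2.1, c2.2.2.2.2.2] <;>
    push_cast <;> ring
end

section
/- Let p_n(x) be polynomials satisfying p_n(x) = (a_n x + b_n) p_{n-1}(x) - c_n p_{n-2}(x) with p_0 = 1, p_1(x) = a_1 x + b_1, and suppose a_1 a_n c_n ≠ 0 for all n > 1 and p_n has n roots x_1,…,x_n (with multiplicity) in the field. Then ∏_{i=1}^n p_{n-1}(x_i) = (-1)^{n(n-1)/2} ∏_{j=1}^n a_j^{n-2j+1} c_j^{j-1}. -/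
open Polynomial

/-- Schur's theorem: for polynomials satisfying the three-term recurrence
`pₙ = (aₙ x + bₙ) pₙ₋₁ - cₙ pₙ₋₂` with `p₀ = 1`, `p₁ = a₁ x + b₁` and
`a₁ aₙ cₙ ≠ 0` for `n > 1`, the product of `pₙ₋₁` over the roots of `pₙ`
(with multiplicity) equals `(-1)^{n(n-1)/2} ∏_{j=1}^n aⱼ^{n-2j+1} cⱼ^{j-1}`. -/
theorem schur_resultant (a b c : ℕ → ℂ) (p : ℕ → ℂ[X])
    (hp0 : p 0 = 1)
    (hp1 : p 1 = C (a 1) * X + C (b 1))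
    (hrec : ∀ m : ℕ, 2 ≤ m → p m = (C (a m) * X + C (b m)) * p (m - 1) - C (c m) * p (m - 2))
    (hne : ∀ m : ℕ, 1 < m → a 1 * a m * c m ≠ 0)
    (n : ℕ) (hn : 1 ≤ n) (hroots : Multiset.card (p n).roots = n) :
    ((p n).roots.map fun x => (p (n - 1)).eval x).prod =
      (-1) ^ (n * (n - 1) / 2) *
        ∏ j ∈ Finset.Icc 1 n, a j ^ ((n : ℤ) - 2 * j + 1) * c j ^ (j - 1) := by
  clear hroots
  have ha : ∀ m, 1 ≤ m → a m ≠ 0 := by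
    intro m hm h0
    rcases eq_or_lt_of_le hm with h | h
    · exact hne 2 one_lt_two (by rw [h, h0]; ring)
    · exact hne m h (by rw [h0]; ring)
  have hc : ∀ m, 2 ≤ m → c m ≠ 0 := fun m hm h0 => hne m hm (by rw [h0]; ring)
  set A : ℕ → ℂ := fun m => ∏ j ∈ Finset.Icc 1 m, a j with hA
  have hAne : ∀ m, A m ≠ 0 := by
    intro m
    exact Finset.prod_ne_zero_iff.2 fun j hj => ha j (Finset.mem_Icc.1 hj).1
  have hAsucc : ∀ m, A (m + 1) = A m * a (m + 1) := fun m =>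
    Finset.prod_Icc_succ_top (by omega) a
  -- degrees and leading coefficients
  have hdeg : ∀ m, (p m).natDegree = m ∧ (p m).leadingCoeff = A m := by
    intro m
    induction m using Nat.strong_induction_on with
    | _ m ih =>
      match m with
      | 0 => simp [hp0, hA]
      | 1 =>
        rw [hp1]
        refine ⟨natDegree_linear (ha 1 le_rfl), ?_⟩
        rw [leadingCoeff_linear (ha 1 le_rfl)]
        simp [hA]
      | (k+2) =>
        have h1 := ih (k+1) (by omega)
        have h0 := ih k (by omega)
        have hm : p (k+2) = (C (a (k+2)) * X + C (b (k+2))) * p (k+1) - C (c (k+2)) * p k := by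
          have := hrec (k+2) (by omega)
          simpa using this
        have hane := ha (k+2) (by omega)
        have hq : (C (a (k+2)) * X + C (b (k+2))).natDegree = 1 := natDegree_linear hane
        have hp1ne : p (k+1) ≠ 0 := fun h => hAne (k+1) (by rw [← h1.2, h, leadingCoeff_zero])
        have hlin_ne : (C (a (k+2)) * X + C (b (k+2))) ≠ 0 := fun h => by simp [h] at hq
        have hmul : ((C (a (k+2)) * X + C (b (k+2))) * p (k+1)).natDegree = k + 2 := by
          rw [natDegree_mul hlin_ne hp1ne, hq, h1.1]
          omega
        have hsubdeg : (C (c (k+2)) * p k).natDegree < k + 2 := by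
          have h2 := natDegree_mul_le (p := C (c (k+2))) (q := p k)
          simp only [natDegree_C, zero_add, h0.1] at h2
          omega
        have hnd : (p (k+2)).natDegree = k + 2 := by
          rw [hm, natDegree_sub_eq_left_of_natDegree_lt (by rw [hmul]; exact hsubdeg), hmul]
        refine ⟨hnd, ?_⟩
        have : (p (k+2)).leadingCoeff = (p (k+2)).coeff (k+2) := by rw [leadingCoeff, hnd]
        have hcf := coeff_mul_degree_add_degree (C (a (k+2)) * X + C (b (k+2))) (p (k+1))
        rw [hq, h1.1, leadingCoeff_linear hane, h1.2] at hcf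
        have e12 : 1 + (k+1) = k + 2 := by omega
        rw [e12] at hcf
        rw [this, hm, coeff_sub, coeff_eq_zero_of_natDegree_lt hsubdeg, sub_zero, hcf,
          hAsucc (k+1), mul_comm]
  have hpne : ∀ m, p m ≠ 0 := fun m h => hAne m (by rw [← (hdeg m).2, h, leadingCoeff_zero])
  have hsplits : ∀ m, Splits (p m) := fun m => IsAlgClosed.splits _
  have hcard : ∀ m, Multiset.card (p m).roots = m := fun m =>
    (splits_iff_card_roots.mp (hsplits m)).trans (hdeg m).1
  have heval : ∀ m x, (p m).eval x = A m * ((p m).roots.map fun β => x - β).prod := by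
    intro m x
    conv_lhs => rw [(hsplits m).eq_prod_roots]
    rw [eval_mul, eval_C, (hdeg m).2, eval_multiset_prod, Multiset.map_map]
    simp
  -- the R-recurrence
  have hrecR : ∀ n : ℕ, 1 ≤ n →
      A (n+1) ^ n * ((p (n+1)).roots.map fun x => (p n).eval x).prod =
      A n ^ (n+1) * (-c (n+1)) ^ n * ((p n).roots.map fun x => (p (n-1)).eval x).prod := by
    intro n hn1
    have hR1 : ((p (n+1)).roots.map fun x => (p n).eval x).prod =
        A n ^ (n+1) * ((p (n+1)).roots.map fun x => ((p n).roots.map fun β => x - β).prod).prod := by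
      calc ((p (n+1)).roots.map fun x => (p n).eval x).prod
          = ((p (n+1)).roots.map fun x => A n * ((p n).roots.map fun β => x - β).prod).prod := by
            simp only [heval]
        _ = _ := by
            rw [Multiset.prod_map_mul, Multiset.map_const', Multiset.prod_replicate, hcard]
    have hS : ((p n).roots.map fun x => (p (n+1)).eval x).prod =
        (-c (n+1)) ^ n * ((p n).roots.map fun x => (p (n-1)).eval x).prod := by
      have hev : ∀ x ∈ (p n).roots, (p (n+1)).eval x = -c (n+1) * (p (n-1)).eval x := by
        intro x hx
        have hrt : (p n).eval x = 0 := isRoot_of_mem_roots hx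
        have h2 : p (n+1) = (C (a (n+1)) * X + C (b (n+1))) * p n - C (c (n+1)) * p (n-1) := by
          have := hrec (n+1) (by omega)
          have e1 : n + 1 - 1 = n := by omega
          have e2 : n + 1 - 2 = n - 1 := by omega
          rwa [e1, e2] at this
        rw [h2]
        simp only [eval_sub, eval_mul, eval_add, eval_C, eval_X, hrt]
        ring
      rw [Multiset.map_congr rfl hev, Multiset.prod_map_mul, Multiset.map_const',
        Multiset.prod_replicate, hcard]
    have hS2 : ((p n).roots.map fun x => (p (n+1)).eval x).prod =
        A (n+1) ^ n * ((p (n+1)).roots.map fun x => ((p n).roots.map fun β => x - β).prod).prod := by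
      calc ((p n).roots.map fun x => (p (n+1)).eval x).prod
          = ((p n).roots.map fun x => A (n+1) * ((p (n+1)).roots.map fun β => x - β).prod).prod := by
            simp only [heval]
        _ = A (n+1) ^ n * ((p n).roots.map fun x => ((p (n+1)).roots.map fun β => x - β).prod).prod := by
            rw [Multiset.prod_map_mul, Multiset.map_const', Multiset.prod_replicate, hcard]
        _ = _ := by
            congr 1
            calc ((p n).roots.map fun x => ((p (n+1)).roots.map fun β => x - β).prod).prod
                = ((p n).roots.map fun x =>
                    (-1 : ℂ) ^ (n+1) * ((p (n+1)).roots.map fun β => β - x).prod).prod := by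
                  refine congrArg Multiset.prod (Multiset.map_congr rfl ?_)
                  intro x hx
                  have h1 : ((p (n+1)).roots.map fun β => x - β) =
                      ((p (n+1)).roots.map fun β => (-1) * (β - x)) := by
                    apply Multiset.map_congr rfl; intro β hβ; ring
                  rw [h1, Multiset.prod_map_mul, Multiset.map_const', Multiset.prod_replicate,
                    hcard]
              _ = ((-1 : ℂ) ^ (n+1)) ^ n *
                  ((p n).roots.map fun x => ((p (n+1)).roots.map fun β => β - x).prod).prod := by
                  rw [Multiset.prod_map_mul, Multiset.map_const', Multiset.prod_replicate, hcard]
              _ = ((p (n+1)).roots.map fun β => ((p n).roots.map fun x => β - x).prod).prod := by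
                  rw [← pow_mul, Multiset.prod_map_prod_map]
                  have hev2 : Even ((n+1) * n) := by
                    rw [Nat.mul_comm]; exact Nat.even_mul_succ_self n
                  rw [Even.neg_one_pow hev2, one_mul]
      -- end
    calc A (n+1) ^ n * ((p (n+1)).roots.map fun x => (p n).eval x).prod
        = A n ^ (n+1) * (A (n+1) ^ n *
            ((p (n+1)).roots.map fun x => ((p n).roots.map fun β => x - β).prod).prod) := by
          rw [hR1]; ring
      _ = A n ^ (n+1) * ((p n).roots.map fun x => (p (n+1)).eval x).prod := by rw [← hS2]
      _ = _ := by rw [hS]; ring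
  -- main induction
  induction n, hn using Nat.le_induction with
  | base =>
    have h1 : (p 0) = 1 := hp0
    simp only [Nat.sub_self, h1, eval_one]
    rw [Multiset.map_const', Multiset.prod_replicate, one_pow]
    norm_num
  | succ n hn1 ih =>
    have key := hrecR n hn1
    have ihv := ih
    have e1 : n + 1 - 1 = n := by omega
    rw [e1]
    have hAn1 : A (n+1) ^ n ≠ 0 := pow_ne_zero _ (hAne _)
    have hRval : ((p (n+1)).roots.map fun x => (p n).eval x).prod =
        (A (n+1) ^ n)⁻¹ * (A n ^ (n+1) * (-c (n+1)) ^ n *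
          ((p n).roots.map fun x => (p (n-1)).eval x).prod) := by
      field_simp at key ⊢
      linear_combination key
    rw [hRval, ihv]
    -- now pure algebra
    have hsign : (n+1) * n / 2 = n * (n - 1) / 2 + n := by
      obtain ⟨k, hk⟩ : Even (n * (n-1)) := Nat.even_mul_pred_self n
      have hm2 : (n+1) * n = n * (n-1) + 2 * n := by
        have e : n - 1 + 2 = n + 1 := by omega
        calc (n+1)*n = n * (n - 1 + 2) := by rw [e]; ring
          _ = n*(n-1) + 2*n := by ring
      omega
    have hprod : ∏ j ∈ Finset.Icc 1 (n+1), a j ^ (((n:ℤ)+1) - 2 * j + 1) * c j ^ (j - 1) =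
        (A n * (a (n+1) ^ n)⁻¹ * c (n+1) ^ n) *
          ∏ j ∈ Finset.Icc 1 n, a j ^ ((n:ℤ) - 2 * j + 1) * c j ^ (j - 1) := by
      rw [Finset.prod_Icc_succ_top (by omega)]
      have hstep : ∀ j ∈ Finset.Icc 1 n,
          a j ^ (((n:ℤ)+1) - 2 * j + 1) * c j ^ (j - 1) =
          a j * (a j ^ ((n:ℤ) - 2 * j + 1) * c j ^ (j - 1)) := by
        intro j hj
        have haj := ha j (Finset.mem_Icc.1 hj).1
        have : ((n:ℤ)+1) - 2 * j + 1 = 1 + ((n:ℤ) - 2 * j + 1) := by ring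
        rw [this, zpow_add₀ haj, zpow_one]
        ring
      rw [Finset.prod_congr rfl hstep, Finset.prod_mul_distrib]
      have htop : a (n+1) ^ (((n:ℤ)+1) - 2 * (((n+1 : ℕ)) : ℤ) + 1) = (a (n+1) ^ n)⁻¹ := by
        have : ((n:ℤ)+1) - 2 * (((n+1 : ℕ)) : ℤ) + 1 = -(n:ℤ) := by push_cast; ring
        rw [this, zpow_neg, zpow_natCast]
      rw [htop]
      simp only [Nat.add_sub_cancel, hA]
      ring
    push_cast
    rw [hprod, hsign, pow_add]
    have hscalar : (A (n+1) ^ n)⁻¹ * (A n ^ (n+1) * (-c (n+1)) ^ n) =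
        (-1:ℂ)^n * (A n * (a (n+1) ^ n)⁻¹ * c (n+1) ^ n) := by
      rw [hAsucc n, mul_pow, neg_pow, mul_inv]
      have hAn : A n ^ n ≠ 0 := pow_ne_zero _ (hAne n)
      field_simp
      have hone : A n ^ n * (A n)⁻¹ ^ n = (1:ℂ) := by
        rw [← mul_pow, mul_inv_cancel₀ (hAne n), one_pow]
      linear_combination
    linear_combination ((-1:ℂ) ^ (n * (n - 1) / 2) *
      ∏ j ∈ Finset.Icc 1 n, a j ^ ((n:ℤ) - 2 * j + 1) * c j ^ (j - 1)) * hscalar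
end

section
/- For every n ≥ 1 and real z, (1/2) ∫_{-z}^{z} U'_{2n-1}(t) (x - t^2) dt = (x - z^2) U_{2n-1}(z) + T_{2n+1}(z)/(2n+1) + T_{2n-1}(z)/(2n-1), for any real parameter x. -/
open Polynomial Polynomial.Chebyshev

/-- Parity of Chebyshev polynomials at even/odd indices. -/
lemma cheb_parity (k : ℕ) (z : ℝ) :
    ((T ℝ (2 * k)).eval (-z) = (T ℝ (2 * k)).eval z ∧
      (T ℝ (2 * k + 1)).eval (-z) = -(T ℝ (2 * k + 1)).eval z) ∧
    ((U ℝ (2 * k)).eval (-z) = (U ℝ (2 * k)).eval z ∧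
      (U ℝ (2 * k + 1)).eval (-z) = -(U ℝ (2 * k + 1)).eval z) := by
  induction k with
  | zero => simp [T_zero, T_one, U_zero, U_one]
  | succ k ih =>
    obtain ⟨⟨hT0, hT1⟩, hU0, hU1⟩ := ih
    have hT0' : (T ℝ (2 * (k : ℤ) + 2)).eval (-z) = (T ℝ (2 * (k : ℤ) + 2)).eval z := by
      rw [T_add_two]
      simp only [eval_sub, eval_mul, eval_ofNat, eval_X, hT0, hT1]
      ring
    have hU0' : (U ℝ (2 * (k : ℤ) + 2)).eval (-z) = (U ℝ (2 * (k : ℤ) + 2)).eval z := by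
      rw [U_add_two]
      simp only [eval_sub, eval_mul, eval_ofNat, eval_X, hU0, hU1]
      ring
    have hT1' : (T ℝ ((2 * (k : ℤ) + 1) + 2)).eval (-z)
        = -(T ℝ ((2 * (k : ℤ) + 1) + 2)).eval z := by
      rw [T_add_two, show (2 * (k : ℤ) + 1 + 1) = 2 * k + 2 from by ring]
      simp only [eval_sub, eval_mul, eval_ofNat, eval_X, hT0', hT1]
      ring
    have hU1' : (U ℝ ((2 * (k : ℤ) + 1) + 2)).eval (-z)
        = -(U ℝ ((2 * (k : ℤ) + 1) + 2)).eval z := by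
      rw [U_add_two, show (2 * (k : ℤ) + 1 + 1) = 2 * k + 2 from by ring]
      simp only [eval_sub, eval_mul, eval_ofNat, eval_X, hU0', hU1]
      ring
    push_cast
    rw [show (2 * ((k : ℤ) + 1)) = 2 * (k : ℤ) + 2 from by ring]
    rw [show (2 * (k : ℤ) + 2 + 1) = (2 * (k : ℤ) + 1) + 2 from by ring]
    exact ⟨⟨hT0', hT1'⟩, hU0', hU1'⟩

/-- The derivative of the antiderivative polynomial. -/
lemma key_deriv (x a b : ℝ) (m : ℤ) (ha : a * ((m : ℝ) + 2) = 1) (hb : b * (m : ℝ) = 1) :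
    derivative ((C x - X ^ 2) * U ℝ m + C a * T ℝ (m + 2) + C b * T ℝ m) =
      (C x - X ^ 2) * derivative (U ℝ m) := by
  have h1 : (C a) * ((m + 2 : ℤ) : ℝ[X]) = 1 := by
    rw [← C_eq_intCast, ← Polynomial.C_mul, ← Polynomial.C_1]; congr 1; push_cast; linarith [ha]
  have h2 : (C b) * ((m : ℤ) : ℝ[X]) = 1 := by
    rw [← C_eq_intCast, ← Polynomial.C_mul, ← Polynomial.C_1]; congr 1
  have hU : U ℝ (m + 1) = 2 * X * U ℝ m - U ℝ (m - 1) := U_add_one ℝ m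
  have hd : derivative (C x - X ^ 2 : ℝ[X]) = -(2 * X) := by
    rw [derivative_sub, derivative_C, derivative_X_pow]
    rw [C_eq_natCast]
    push_cast
    ring
  rw [derivative_add, derivative_add, derivative_mul, derivative_mul, derivative_mul,
    derivative_C, derivative_C, T_derivative_eq_U, T_derivative_eq_U,
    show m + 2 - 1 = m + 1 by ring, hU, hd]
  push_cast at h1 h2 ⊢
  linear_combination (2 * X * (U ℝ m) - U ℝ (m - 1)) * h1 + (U ℝ (m - 1)) * h2

/-- `(1/2) ∫_{-z}^{z} U'₂ₙ₋₁(t)(x - t²) dt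
  = (x - z²) U₂ₙ₋₁(z) + T₂ₙ₊₁(z)/(2n+1) + T₂ₙ₋₁(z)/(2n-1)`. -/
theorem integral_transform_formula (n : ℕ) (hn : 1 ≤ n) (x z : ℝ) :
    (1 / 2) * ∫ t in (-z)..z, (derivative (U ℝ (2 * n - 1))).eval t * (x - t ^ 2) =
      (x - z ^ 2) * (U ℝ (2 * n - 1)).eval z +
        (T ℝ (2 * n + 1)).eval z / (2 * (n : ℝ) + 1) +
        (T ℝ (2 * n - 1)).eval z / (2 * (n : ℝ) - 1) := by
  obtain ⟨k, rfl⟩ : ∃ k, n = k + 1 := ⟨n - 1, by omega⟩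
  set m : ℤ := 2 * (k + 1 : ℕ) - 1 with hm
  have hmk : m = 2 * (k : ℤ) + 1 := by rw [hm]; push_cast; ring
  have hm2 : m + 2 = 2 * ((k + 1 : ℕ) : ℤ) + 1 := by rw [hm]; push_cast; ring
  have hk0 : (0 : ℝ) ≤ (k : ℝ) := Nat.cast_nonneg k
  have hne1 : (2 * ((k : ℝ) + 1) + 1) ≠ 0 := by nlinarith
  have hne2 : (2 * ((k : ℝ) + 1) - 1) ≠ 0 := by nlinarith
  set a : ℝ := 1 / (2 * ((k : ℝ) + 1) + 1) with hadef
  set b : ℝ := 1 / (2 * ((k : ℝ) + 1) - 1) with hbdef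
  have hmr : ((m : ℝ)) = 2 * ((k : ℝ) + 1) - 1 := by rw [hm]; push_cast; ring
  have ha : a * ((m : ℝ) + 2) = 1 := by
    rw [hmr, hadef]
    rw [show (2 * ((k : ℝ) + 1) - 1 + 2) = 2 * ((k : ℝ) + 1) + 1 from by ring]
    field_simp
  have hb : b * ((m : ℝ)) = 1 := by
    rw [hmr, hbdef]
    field_simp
  set P : ℝ[X] := (C x - X ^ 2) * U ℝ m + C a * T ℝ (m + 2) + C b * T ℝ m with hP
  have hderiv : derivative P = (C x - X ^ 2) * derivative (U ℝ m) := key_deriv x a b m ha hb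
  have hint : ∫ t in (-z)..z, (derivative (U ℝ m)).eval t * (x - t ^ 2) =
      P.eval z - P.eval (-z) := by
    rw [← intervalIntegral.integral_eq_sub_of_hasDerivAt
        (f := fun s => P.eval s) (f' := fun t => (derivative P).eval t)
        (fun t _ => P.hasDerivAt t)
        ((Polynomial.continuous (derivative P)).intervalIntegrable _ _)]
    refine intervalIntegral.integral_congr fun t _ => ?_
    rw [hderiv]
    simp only [eval_mul, eval_sub, eval_pow, eval_C, eval_X]
    ring
  -- parity
  obtain ⟨⟨_, hTm2⟩, _, _⟩ := cheb_parity (k + 1) z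
  obtain ⟨⟨_, hTm⟩, _, hUm⟩ := cheb_parity k z
  have hPneg : P.eval (-z) = -P.eval z := by
    rw [hP]
    simp only [eval_add, eval_mul, eval_sub, eval_pow, eval_C, eval_X]
    rw [hm2, hmk]
    push_cast at hTm2 hTm hUm ⊢
    rw [hTm2, hTm, hUm]
    ring
  have ea : ∀ t : ℝ, a * t = t / (2 * ((k + 1 : ℕ) : ℝ) + 1) := fun t => by
    rw [hadef]; push_cast; ring
  have eb : ∀ t : ℝ, b * t = t / (2 * ((k + 1 : ℕ) : ℝ) - 1) := fun t => by
    rw [hbdef]; push_cast; ring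
  rw [hint, hPneg, show (1 / 2 : ℝ) * (eval z P - -eval z P) = eval z P from by ring, hP]
  simp only [eval_add, eval_mul, eval_sub, eval_pow, eval_C, eval_X]
  rw [hm2, ea, eb]
end
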